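/- arXiv:2503.18444 — 6 statements merged into one kernel-verified Lean document; each statement's English description precedes it below -/
import Mathlib

section
/- The spectrum of the generalized Laplacian L_g(γ) is independent of the dominance coefficient: for every γ > 0, the set of eigenvalues (over ℂ, with multiplicities, i.e., the characteristic polynomial) of L_g(γ) coincides with that of L_g(1). -/
open Polynomial Matrix

lemma charpoly_conj_aux {n : ℕ} (P Q M : Matrix (Fin n) (Fin n) ℂ)
    (hQP : Q * P = 1) (hPQ : P * Q = 1) :
    (P * M * Q).charpoly = M.charpoly := by
  set f : ℂ →+* ℂ[X] := Polynomial.C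
  have hkey : charmatrix (P * M * Q) * P.map f = P.map f * charmatrix M := by
    simp only [charmatrix, RingHom.mapMatrix_apply]
    rw [sub_mul, mul_sub]
    congr 1
    · exact (Matrix.scalar_commute (X : ℂ[X]) (fun r => Commute.all _ _) (P.map f)).eq
    · rw [Matrix.map_mul, Matrix.map_mul, Matrix.mul_assoc, Matrix.mul_assoc,
        ← Matrix.map_mul, hQP, Matrix.map_one f (map_zero f) (map_one f), Matrix.mul_one]
  have hdet : (P.map f).det * (Q.map f).det = 1 := by
    rw [← Matrix.det_mul, ← Matrix.map_mul, hPQ, Matrix.map_one f (map_zero f) (map_one f),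
      Matrix.det_one]
  have hne : (P.map f).det ≠ 0 := by
    intro h; rw [h, zero_mul] at hdet; exact one_ne_zero hdet.symm
  have h2 := congrArg Matrix.det hkey
  rw [Matrix.det_mul, Matrix.det_mul] at h2
  have h3 : Matrix.charpoly (P * M * Q) * (P.map f).det = (P.map f).det * M.charpoly := h2
  rw [mul_comm ((P.map f).det)] at h3
  exact mul_right_cancel₀ hne h3

/-- The spectrum of the generalized Laplacian `L_g(γ)` is independent of
the dominance coefficient: for every `γ > 0`, the eigenvalues of `L_g(γ)` over `ℂ`,
counted with multiplicities (i.e., the characteristic polynomial), coincide with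
those of `L_g(1)`. -/
theorem generalized_laplacian_spectrum_invariance
    (n r : ℕ) (hn : 2 ≤ n) (hr : 1 ≤ r) (hrn : r < n)
    (A : Matrix (Fin n) (Fin n) ℝ) (hA0 : ∀ i : Fin n, A i i = 0)
    (Ag Lg : ℝ → Matrix (Fin n) (Fin n) ℝ) (Dg : Matrix (Fin n) (Fin n) ℝ)
    (hAg : ∀ (γ : ℝ) (i j : Fin n), Ag γ i j =
      if ((i : ℕ) < r ↔ (j : ℕ) < r) then A i j
      else if (i : ℕ) < r then γ * A i j
      else γ⁻¹ * A i j)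
    (hDg : Dg = Matrix.diagonal (fun i : Fin n =>
      (∑ j : Fin n, if ((i : ℕ) < r ↔ (j : ℕ) < r) then A i j else 0) -
      (∑ j : Fin n, if ((i : ℕ) < r ↔ (j : ℕ) < r) then 0 else A i j)))
    (hLg : ∀ γ : ℝ, Lg γ = Dg - Ag γ)
    (γ : ℝ) (hγ : 0 < γ) :
    Matrix.charpoly ((Lg γ).map (algebraMap ℝ ℂ)) =
      Matrix.charpoly ((Lg 1).map (algebraMap ℝ ℂ)) := by
  have hγ0 : (γ : ℂ) ≠ 0 := by exact_mod_cast hγ.ne'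
  set c : Fin n → ℂ := fun i => if (i : ℕ) < r then (γ : ℂ) else 1 with hc
  have hc0 : ∀ i, c i ≠ 0 := by
    intro i; simp only [hc]; split <;> simp [hγ0]
  set P : Matrix (Fin n) (Fin n) ℂ := Matrix.diagonal c with hP
  set Q : Matrix (Fin n) (Fin n) ℂ := Matrix.diagonal (fun i => (c i)⁻¹) with hQ
  have hPQ : P * Q = 1 := by
    rw [hP, hQ, Matrix.diagonal_mul_diagonal, ← Matrix.diagonal_one]
    exact congrArg _ (funext fun i => mul_inv_cancel₀ (hc0 i))
  have hQP : Q * P = 1 := by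
    rw [hP, hQ, Matrix.diagonal_mul_diagonal, ← Matrix.diagonal_one]
    exact congrArg _ (funext fun i => inv_mul_cancel₀ (hc0 i))
  have hconj : (Lg γ).map (algebraMap ℝ ℂ) = P * ((Lg 1).map (algebraMap ℝ ℂ)) * Q := by
    ext i j
    simp only [hP, hQ, Matrix.mul_diagonal, Matrix.diagonal_mul, Matrix.map_apply]
    by_cases hij : i = j
    · subst hij
      rw [mul_comm (c i), mul_assoc, mul_inv_cancel₀ (hc0 i), mul_one]
      congr 1
      rw [hLg, hLg]
      simp [Matrix.sub_apply, hAg]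
    · rw [hLg, hLg, hDg]
      simp only [Matrix.sub_apply, Matrix.diagonal_apply_ne _ hij, zero_sub, map_neg, hAg,
        mul_neg, neg_mul, neg_inj]
      by_cases hi : (i : ℕ) < r <;> by_cases hj : (j : ℕ) < r <;>
        simp only [hi, hj, iff_true, iff_false, if_true, if_false, hc, not_true, not_false_iff,
          _root_.map_mul, map_inv₀, _root_.map_one, one_mul, inv_one, mul_one,
          Complex.coe_algebraMap] <;>
        · push_cast
          field_simp
  rw [hconj]
  exact charpoly_conj_aux P Q _ hQP hPQ
end

section
/- If A is symmetric, then the transformed generalized Laplacian L_gz := P L_g P^{-1} equals D_g − R A R^{-1} and is a symmetric matrix, where P = R Q^{-1}. -/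
/-- If `A` is symmetric, then the transformed generalized Laplacian
`L_gz := P L_g P⁻¹` equals `D_g − R A R⁻¹` and is a symmetric matrix, where
`P = R Q⁻¹`. -/
theorem transformed_laplacian_symmetric
    (n r : ℕ) (hn : 2 ≤ n) (hr : 1 ≤ r) (hrn : r < n)
    (γ : ℝ) (hγ : 0 < γ)
    (A Ag Dg Lg Q R P : Matrix (Fin n) (Fin n) ℝ)
    (hAsymm : A.IsSymm) (hA0 : ∀ i : Fin n, A i i = 0)
    (hAg : ∀ i j : Fin n, Ag i j =
      if ((i : ℕ) < r ↔ (j : ℕ) < r) then A i j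
      else if (i : ℕ) < r then γ * A i j
      else γ⁻¹ * A i j)
    (hDg : Dg = Matrix.diagonal (fun i : Fin n =>
      (∑ j : Fin n, if ((i : ℕ) < r ↔ (j : ℕ) < r) then A i j else 0) -
      (∑ j : Fin n, if ((i : ℕ) < r ↔ (j : ℕ) < r) then 0 else A i j)))
    (hLg : Lg = Dg - Ag)
    (hQ : Q = Matrix.diagonal (fun i : Fin n => if (i : ℕ) < r then γ else 1))
    (hR : R = Matrix.diagonal (fun i : Fin n => if (i : ℕ) < r then (-1 : ℝ) else 1))
    (hP : P = R * Q⁻¹) :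
    P * Lg * P⁻¹ = Dg - R * A * R⁻¹ ∧ (P * Lg * P⁻¹).IsSymm := by
  have hγ0 : γ ≠ 0 := ne_of_gt hγ
  -- explicit inverses
  have hQinv : Q⁻¹ = Matrix.diagonal (fun i : Fin n => if (i : ℕ) < r then γ⁻¹ else 1) := by
    apply Matrix.inv_eq_right_inv
    rw [hQ, Matrix.diagonal_mul_diagonal]
    ext i j
    by_cases h : i = j <;>
      simp [Matrix.diagonal_apply, Matrix.one_apply, h]
    by_cases h2 : (j : ℕ) < r <;> simp [h2, mul_inv_cancel₀ hγ0]
  have hRinv : R⁻¹ = R := by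
    apply Matrix.inv_eq_right_inv
    rw [hR, Matrix.diagonal_mul_diagonal]
    ext i j
    by_cases h : i = j <;>
      simp [Matrix.diagonal_apply, Matrix.one_apply, h]
    by_cases h2 : (j : ℕ) < r <;> simp [h2]
  set p : Fin n → ℝ := fun i => if (i : ℕ) < r then -γ⁻¹ else 1 with hp
  set q : Fin n → ℝ := fun i => if (i : ℕ) < r then -γ else 1 with hq
  have hP' : P = Matrix.diagonal p := by
    rw [hP, hR, hQinv, Matrix.diagonal_mul_diagonal]
    ext i j
    by_cases h : i = j
    · subst h
      by_cases h2 : (i : ℕ) < r <;> simp [hp, h2]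
    · simp [Matrix.diagonal_apply_ne _ h]
  have hPinv : P⁻¹ = Matrix.diagonal q := by
    apply Matrix.inv_eq_right_inv
    rw [hP', Matrix.diagonal_mul_diagonal]
    ext i j
    by_cases h : i = j <;>
      simp [Matrix.diagonal_apply, Matrix.one_apply, h]
    by_cases h2 : (j : ℕ) < r <;>
      simp [hp, hq, h2, inv_mul_cancel₀ hγ0]
  have hAji : ∀ i j : Fin n, A j i = A i j := by
    intro i j
    conv_lhs => rw [← hAsymm]
    rfl
  have key : P * Lg * P⁻¹ = Dg - R * A * R⁻¹ := by
    rw [hLg, hPinv, hRinv, hP', hR]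
    ext i j
    simp only [Matrix.sub_apply, Matrix.mul_apply, Matrix.diagonal_apply, ite_mul, mul_ite,
      zero_mul, mul_zero, Finset.sum_ite_eq, Finset.sum_ite_eq', Finset.mem_univ, if_true]
    by_cases hij : i = j
    · subst hij
      have hAgii : Ag i i = 0 := by rw [hAg]; simp [hA0 i]
      rw [hAgii, hA0 i]
      by_cases h : (i : ℕ) < r <;> simp [hp, hq, h] <;> ring_nf <;>
        field_simp
    · have hDij : Dg i j = 0 := by
        rw [hDg]; simp [Matrix.diagonal_apply_ne _ hij]
      rw [hDij, hAg i j]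
      by_cases h1 : (i : ℕ) < r <;> by_cases h2 : (j : ℕ) < r <;>
        · simp only [hp, hq, h1, h2, if_true, if_false, iff_true, iff_false,
            not_true, not_false_iff]
          field_simp
          try ring
  refine ⟨key, ?_⟩
  rw [key, hRinv]
  have hRT : R.transpose = R := by rw [hR]; exact Matrix.diagonal_transpose _
  have hDT : Dg.transpose = Dg := by rw [hDg]; exact Matrix.diagonal_transpose _
  unfold Matrix.IsSymm
  rw [Matrix.transpose_sub, hDT, Matrix.transpose_mul, Matrix.transpose_mul,
    hRT, hAsymm, Matrix.mul_assoc]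
end

section
/- The transformed generalized Laplacian has zero row sums: (P L_g P^{-1}) 𝟙_n = 0. Equivalently, the vector v ∈ ℝ^n with v_i = −γ for i ∈ V1 and v_i = 1 for i ∈ V2 satisfies L_g v = 0, so 0 is an eigenvalue of the generalized Laplacian L_g with eigenvector v. -/
open scoped Matrix

/-- The transformed generalized Laplacian has zero row sums:
`(P L_g P⁻¹) 𝟙_n = 0`.  Equivalently, the vector `v` with `v_i = −γ` for `i ∈ V1` and
`v_i = 1` for `i ∈ V2` satisfies `L_g v = 0`, so `0` is an eigenvalue of `L_g` with
eigenvector `v`. -/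
theorem generalized_laplacian_zero_eigenvalue
    (n r : ℕ) (hn : 2 ≤ n) (hr : 1 ≤ r) (hrn : r < n)
    (γ : ℝ) (hγ : 0 < γ)
    (A Ag Dg Lg Q R P : Matrix (Fin n) (Fin n) ℝ)
    (hA0 : ∀ i : Fin n, A i i = 0)
    (hAg : ∀ i j : Fin n, Ag i j =
      if ((i : ℕ) < r ↔ (j : ℕ) < r) then A i j
      else if (i : ℕ) < r then γ * A i j
      else γ⁻¹ * A i j)
    (hDg : Dg = Matrix.diagonal (fun i : Fin n =>
      (∑ j : Fin n, if ((i : ℕ) < r ↔ (j : ℕ) < r) then A i j else 0) -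
      (∑ j : Fin n, if ((i : ℕ) < r ↔ (j : ℕ) < r) then 0 else A i j)))
    (hLg : Lg = Dg - Ag)
    (hQ : Q = Matrix.diagonal (fun i : Fin n => if (i : ℕ) < r then γ else 1))
    (hR : R = Matrix.diagonal (fun i : Fin n => if (i : ℕ) < r then (-1 : ℝ) else 1))
    (hP : P = R * Q⁻¹)
    (v : Fin n → ℝ)
    (hv : v = fun i : Fin n => if (i : ℕ) < r then -γ else 1) :
    (P * Lg * P⁻¹) *ᵥ (fun _ : Fin n => (1 : ℝ)) = 0 ∧ Lg *ᵥ v = 0 ∧ v ≠ 0 := by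
  have hγ' : γ ≠ 0 := ne_of_gt hγ
  have key : Lg *ᵥ v = 0 := by
    funext i
    have hS : ∑ j : Fin n, Ag i j * v j =
        (if (i:ℕ) < r then
          (-γ) * (∑ j : Fin n, if ((i:ℕ)<r ↔ (j:ℕ)<r) then A i j else 0)
            + γ * (∑ j : Fin n, if ((i:ℕ)<r ↔ (j:ℕ)<r) then 0 else A i j)
        else
          (∑ j : Fin n, if ((i:ℕ)<r ↔ (j:ℕ)<r) then A i j else 0)
            - (∑ j : Fin n, if ((i:ℕ)<r ↔ (j:ℕ)<r) then 0 else A i j)) := by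
      by_cases hi : (i:ℕ) < r
      · simp only [hi, if_true, Finset.mul_sum, ← Finset.sum_add_distrib]
        refine Finset.sum_congr rfl fun j _ => ?_
        by_cases hj : (j:ℕ) < r <;> simp [hAg, hv, hi, hj] <;> ring
      · simp only [hi, if_false, ← Finset.sum_sub_distrib]
        refine Finset.sum_congr rfl fun j _ => ?_
        by_cases hj : (j:ℕ) < r <;> simp [hAg, hv, hi, hj]
        field_simp
    have hrow : (Lg *ᵥ v) i =
        ((∑ j : Fin n, if ((i:ℕ)<r ↔ (j:ℕ)<r) then A i j else 0) -
         (∑ j : Fin n, if ((i:ℕ)<r ↔ (j:ℕ)<r) then 0 else A i j)) * v i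
        - ∑ j : Fin n, Ag i j * v j := by
      rw [hLg, Matrix.sub_mulVec]
      show (Dg *ᵥ v) i - (Ag *ᵥ v) i = _
      rw [hDg, Matrix.mulVec_diagonal]
      simp [Matrix.mulVec, dotProduct]
    rw [hrow, hS, hv]
    by_cases hi : (i:ℕ) < r <;> simp [hi] <;> ring
  have hQinv : Q⁻¹ = Matrix.diagonal (fun i : Fin n => if (i:ℕ) < r then γ⁻¹ else 1) := by
    apply Matrix.inv_eq_right_inv
    rw [hQ, Matrix.diagonal_mul_diagonal]
    have hfun : (fun i : Fin n => (if (i:ℕ)<r then γ else 1) * (if (i:ℕ)<r then γ⁻¹ else 1))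
        = fun _ : Fin n => (1:ℝ) := by
      funext i; by_cases hi : (i:ℕ) < r <;> simp [hi, hγ']
    rw [hfun, Matrix.diagonal_one]
  have hPdiag : P = Matrix.diagonal (fun i : Fin n => if (i:ℕ) < r then -γ⁻¹ else 1) := by
    rw [hP, hR, hQinv, Matrix.diagonal_mul_diagonal]
    have hfun : (fun i : Fin n => (if (i:ℕ)<r then (-1:ℝ) else 1) * (if (i:ℕ)<r then γ⁻¹ else 1))
        = fun i : Fin n => if (i:ℕ)<r then -γ⁻¹ else 1 := by
      funext i; by_cases hi : (i:ℕ) < r <;> simp [hi]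
    rw [hfun]
  have hPinv : P⁻¹ = Matrix.diagonal v := by
    apply Matrix.inv_eq_right_inv
    rw [hPdiag, hv, Matrix.diagonal_mul_diagonal]
    have hfun : (fun i : Fin n => (if (i:ℕ)<r then -γ⁻¹ else 1) * (if (i:ℕ)<r then -γ else 1))
        = fun _ : Fin n => (1:ℝ) := by
      funext i
      by_cases hi : (i:ℕ) < r <;> simp [hi]
      field_simp
    rw [hfun, Matrix.diagonal_one]
  refine ⟨?_, key, ?_⟩
  · have h1 : P⁻¹ *ᵥ (fun _ : Fin n => (1:ℝ)) = v := by
      funext i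
      simp [hPinv, Matrix.mulVec_diagonal]
    calc (P * Lg * P⁻¹) *ᵥ (fun _ : Fin n => (1:ℝ))
        = P *ᵥ (Lg *ᵥ (P⁻¹ *ᵥ (fun _ : Fin n => (1:ℝ)))) := by
          rw [Matrix.mulVec_mulVec, Matrix.mulVec_mulVec]
      _ = 0 := by rw [h1, key, Matrix.mulVec_zero]
  · intro h
    have h0 : (0:ℕ) < n := lt_of_lt_of_le (by norm_num) hn
    have hc := congrFun h ⟨0, h0⟩
    rw [hv] at hc
    simp only [Pi.zero_apply] at hc
    have h0r : ((⟨0, h0⟩ : Fin n) : ℕ) < r := hr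
    rw [if_pos h0r] at hc
    linarith
end

section
/- A signed network G admitting at least one GQSB bipartition has a unique GQSB bipartition if and only if its positive subgraph G_+ has exactly 2 connected components; in that case G is quasi-structurally balanced, and whenever G_+ has p > 2 components the GQSB bipartition is non-unique. -/
/-- A GQSB bipartition of a signed network with adjacency `A`: two nonempty disjoint
subsets covering all vertices with every inter-subset entry nonpositive. -/
def IsGQSBBipartition {V : Type*} [Fintype V] [DecidableEq V]
    (A : V → V → ℝ) (W₁ W₂ : Finset V) : Prop :=
  W₁.Nonempty ∧ W₂.Nonempty ∧ Disjoint W₁ W₂ ∧ W₁ ∪ W₂ = Finset.univ ∧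
    ∀ i ∈ W₁, ∀ j ∈ W₂, A i j ≤ 0

/-- A signed network admitting at least one GQSB bipartition has a unique
(unordered) GQSB bipartition if and only if its positive subgraph `G₊` has exactly `2`
connected components; in that case the network is quasi-structurally balanced (any two
vertices in the same subset are joined by a positive path), and whenever `G₊` has
`p > 2` components, the GQSB bipartition is non-unique. -/
theorem gqsb_bipartition_unique_iff
    {V : Type*} [Fintype V] [DecidableEq V]
    (A : V → V → ℝ) (hAsymm : ∀ i j : V, A i j = A j i) (hA0 : ∀ i : V, A i i = 0)
    (Gp : SimpleGraph V) (hGp : ∀ i j : V, Gp.Adj i j ↔ 0 < A i j)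
    (p : ℕ) (hp : p = Nat.card Gp.ConnectedComponent) (hp2 : 2 ≤ p)
    (S : Set (Sym2 (Finset V)))
    (hS : S = { s : Sym2 (Finset V) | ∃ W₁ W₂ : Finset V,
      s = s(W₁, W₂) ∧ IsGQSBBipartition A W₁ W₂ })
    (hSne : S.Nonempty) :
    ((∃! s, s ∈ S) ↔ p = 2) ∧
    (p = 2 → ∀ W₁ W₂ : Finset V, IsGQSBBipartition A W₁ W₂ →
      (∀ i ∈ W₁, ∀ j ∈ W₁, Gp.Reachable i j) ∧
      (∀ i ∈ W₂, ∀ j ∈ W₂, Gp.Reachable i j)) ∧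
    (2 < p → ∃ s₁ ∈ S, ∃ s₂ ∈ S, s₁ ≠ s₂) := by
  classical
  -- symmetry of bipartitions
  have symm : ∀ W₁ W₂ : Finset V, IsGQSBBipartition A W₁ W₂ → IsGQSBBipartition A W₂ W₁ := by
    rintro W₁ W₂ ⟨h1, h2, hd, hu, hle⟩
    refine ⟨h2, h1, hd.symm, by rw [Finset.union_comm]; exact hu, fun i hi j hj => ?_⟩
    rw [hAsymm]; exact hle j hj i hi
  -- adjacent vertices stay on the same side
  have key : ∀ W₁ W₂ : Finset V, IsGQSBBipartition A W₁ W₂ →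
      ∀ i j : V, Gp.Adj i j → i ∈ W₁ → j ∈ W₁ := by
    rintro W₁ W₂ ⟨-, -, hdisj, huniv, hle⟩ i j hadj hi
    by_contra hj
    have hj2 : j ∈ W₂ := by
      have : j ∈ W₁ ∪ W₂ := huniv ▸ Finset.mem_univ j
      rcases Finset.mem_union.mp this with h | h
      · exact absurd h hj
      · exact h
    exact absurd ((hGp i j).mp hadj) (not_lt.mpr (hle i hi j hj2))
  have keyR : ∀ W₁ W₂ : Finset V, IsGQSBBipartition A W₁ W₂ →
      ∀ i j : V, Gp.Reachable i j → i ∈ W₁ → j ∈ W₁ := by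
    intro W₁ W₂ hW i j hr
    obtain ⟨w⟩ := hr
    induction w with
    | nil => exact fun h => h
    | cons h w ih => exact fun hi => ih (key _ _ hW _ _ h hi)
  -- component finsets
  set F : Gp.ConnectedComponent → Finset V :=
    fun c => Finset.univ.filter fun v => Gp.connectedComponentMk v = c with hF
  have memF : ∀ (v : V) (c), v ∈ F c ↔ Gp.connectedComponentMk v = c := by
    intro v c; simp [hF]
  have Fne : ∀ c, (F c).Nonempty := by
    intro c
    obtain ⟨v, hv⟩ : ∃ v, Gp.connectedComponentMk v = c := Quot.exists_rep c
    exact ⟨v, (memF v c).mpr hv⟩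
  -- each component finset with (nonempty) complement is a GQSB bipartition
  have bipF : ∀ c : Gp.ConnectedComponent, ((F c)ᶜ : Finset V).Nonempty →
      IsGQSBBipartition A (F c) (F c)ᶜ := by
    intro c hne
    refine ⟨Fne c, hne, disjoint_compl_right, Finset.union_compl _, fun i hi j hj => ?_⟩
    have hic : Gp.connectedComponentMk i = c := (memF i c).mp hi
    have hjc : Gp.connectedComponentMk j ≠ c := by
      intro h; exact (Finset.mem_compl.mp hj) ((memF j c).mpr h)
    by_contra hpos
    have hadj : Gp.Adj i j := (hGp i j).mpr (lt_of_not_ge hpos)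
    exact hjc ((SimpleGraph.ConnectedComponent.eq.mpr hadj.reachable).symm.trans hic)
  -- part three : p > 2 gives two distinct bipartitions
  have part3 : 2 < p → ∃ s₁ ∈ S, ∃ s₂ ∈ S, s₁ ≠ s₂ := by
    intro hlt
    haveI : Fintype Gp.ConnectedComponent := Fintype.ofFinite _
    rw [hp, Nat.card_eq_fintype_card] at hlt
    obtain ⟨c₁, c₂, c₃, h12, h13, h23⟩ := Fintype.two_lt_card_iff.mp hlt
    obtain ⟨v₃, hv₃⟩ : ∃ v, Gp.connectedComponentMk v = c₃ := Quot.exists_rep c₃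
    have hcne : ∀ c, c ≠ c₃ → ((F c)ᶜ : Finset V).Nonempty := by
      intro c hc
      refine ⟨v₃, Finset.mem_compl.mpr fun h => ?_⟩
      exact hc (((memF v₃ c).mp h).symm.trans hv₃)
    have hb₁ := bipF c₁ (hcne c₁ h13)
    have hb₂ := bipF c₂ (hcne c₂ h23)
    refine ⟨s(F c₁, (F c₁)ᶜ), ?_, s(F c₂, (F c₂)ᶜ), ?_, ?_⟩
    · rw [hS]; exact ⟨F c₁, (F c₁)ᶜ, rfl, hb₁⟩
    · rw [hS]; exact ⟨F c₂, (F c₂)ᶜ, rfl, hb₂⟩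
    · intro heq
      rcases Sym2.eq_iff.mp heq with ⟨h, -⟩ | ⟨h, h'⟩
      · obtain ⟨v, hv⟩ := Fne c₁
        exact h12 (((memF v c₁).mp hv).symm.trans ((memF v c₂).mp (h ▸ hv)))
      · have hv3c1 : v₃ ∈ (F c₁)ᶜ := Finset.mem_compl.mpr fun hmem =>
          h13 (((memF v₃ c₁).mp hmem).symm.trans hv₃)
        have hv3c2 : v₃ ∈ F c₂ := h' ▸ hv3c1
        exact h23 (((memF v₃ c₂).mp hv3c2).symm.trans hv₃)
  -- everything that follows from p = 2
  have main2 : p = 2 →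
      (∀ W₁ W₂ : Finset V, IsGQSBBipartition A W₁ W₂ →
        (∀ i ∈ W₁, ∀ j ∈ W₁, Gp.Reachable i j) ∧
        (∀ i ∈ W₂, ∀ j ∈ W₂, Gp.Reachable i j)) ∧
      (∀ s ∈ S, ∀ t ∈ S, s = t) := by
    intro hpe
    obtain ⟨c₁, c₂, hcne, hcuniv⟩ :=
      Nat.card_eq_two_iff.mp ((hpe.symm.trans hp).symm)
    have htwo : ∀ c : Gp.ConnectedComponent, c = c₁ ∨ c = c₂ := by
      intro c
      have : c ∈ ({c₁, c₂} : Set _) := hcuniv ▸ Set.mem_univ c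
      simpa using this
    -- any two vertices on the same side are reachable
    have same : ∀ Wa Wb : Finset V, IsGQSBBipartition A Wa Wb →
        ∀ i ∈ Wa, ∀ j ∈ Wa, Gp.Reachable i j := by
      intro Wa Wb hab i hi j hj
      obtain ⟨k, hk⟩ := hab.2.1
      have hik : Gp.connectedComponentMk i ≠ Gp.connectedComponentMk k := by
        intro h
        have : k ∈ Wa := keyR _ _ hab i k (SimpleGraph.ConnectedComponent.exact h) hi
        exact (Finset.disjoint_left.mp hab.2.2.1 this) hk
      have hjk : Gp.connectedComponentMk j ≠ Gp.connectedComponentMk k := by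
        intro h
        have : k ∈ Wa := keyR _ _ hab j k (SimpleGraph.ConnectedComponent.exact h) hj
        exact (Finset.disjoint_left.mp hab.2.2.1 this) hk
      have heq : Gp.connectedComponentMk i = Gp.connectedComponentMk j := by
        rcases htwo (Gp.connectedComponentMk i) with h1 | h1 <;>
        rcases htwo (Gp.connectedComponentMk j) with h2 | h2 <;>
        rcases htwo (Gp.connectedComponentMk k) with h3 | h3 <;>
          first
          | (exact absurd (h1.trans h3.symm) hik)
          | (exact absurd (h2.trans h3.symm) hjk)
          | (rw [h1, h2])
      exact SimpleGraph.ConnectedComponent.exact heq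
    -- each side equals the component finset of any of its elements
    have eqF : ∀ Wa Wb : Finset V, IsGQSBBipartition A Wa Wb →
        ∀ i₀ ∈ Wa, Wa = F (Gp.connectedComponentMk i₀) := by
      intro Wa Wb hab i₀ hi₀
      apply Finset.ext; intro v
      rw [memF]
      constructor
      · intro hv
        exact (SimpleGraph.ConnectedComponent.eq.mpr (same _ _ hab i₀ hi₀ v hv)).symm
      · intro h
        exact keyR _ _ hab i₀ v (SimpleGraph.ConnectedComponent.exact h.symm) hi₀
    -- canonical form of any element of S
    have canon : ∀ s ∈ S, s = s(F c₁, F c₂) := by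
      intro s hs
      rw [hS] at hs
      obtain ⟨W₁, W₂, rfl, hW⟩ := hs
      obtain ⟨i₀, hi₀⟩ := hW.1
      obtain ⟨j₀, hj₀⟩ := hW.2.1
      have hW' := symm _ _ hW
      have h1 := eqF _ _ hW i₀ hi₀
      have h2 := eqF _ _ hW' j₀ hj₀
      have hij : Gp.connectedComponentMk i₀ ≠ Gp.connectedComponentMk j₀ := by
        intro h
        have : j₀ ∈ W₁ := by
          rw [h1]; exact (memF j₀ _).mpr h.symm
        exact (Finset.disjoint_left.mp hW.2.2.1 this) hj₀
      rcases htwo (Gp.connectedComponentMk i₀) with hi | hi <;>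
      rcases htwo (Gp.connectedComponentMk j₀) with hj | hj
      · exact absurd (hi.trans hj.symm) hij
      · rw [h1, h2, hi, hj]
      · rw [h1, h2, hi, hj]; exact Sym2.eq_swap
      · exact absurd (hi.trans hj.symm) hij
    refine ⟨?_, fun s hs t ht => (canon s hs).trans (canon t ht).symm⟩
    intro W₁ W₂ hW
    exact ⟨same W₁ W₂ hW, same W₂ W₁ (symm _ _ hW)⟩
  refine ⟨⟨?_, ?_⟩, fun hpe => (main2 hpe).1, part3⟩
  · intro h
    by_contra hne
    have hlt : 2 < p := lt_of_le_of_ne hp2 (Ne.symm hne)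
    obtain ⟨s₁, hs₁, s₂, hs₂, hne'⟩ := part3 hlt
    obtain ⟨s, -, hu⟩ := h
    exact hne' ((hu s₁ hs₁).trans (hu s₂ hs₂).symm)
  · intro hpe
    obtain ⟨s₀, hs₀⟩ := hSne
    exact ⟨s₀, hs₀, fun t ht => (main2 hpe).2 t ht s₀ hs₀⟩
end

section
/- Let L ∈ ℝ^{n×n} be symmetric positive semi-definite with L𝟙_n = 0 and with 0 a simple eigenvalue (equivalently, the kernel of L is exactly the span of the all-ones vector 𝟙_n). Then for every initial vector z_0 ∈ ℝ^n, the matrix-exponential flow converges to average consensus: exp(−tL) z_0 → (1/n) 𝟙_n 𝟙_n^T z_0 as t → ∞. -/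
open scoped Matrix

/-- If `L` is symmetric positive semi-definite with `L 𝟙 = 0` and kernel
exactly the span of the all-ones vector, then the flow `exp(−tL) z₀` converges to
average consensus `(1/n) 𝟙 𝟙ᵀ z₀` as `t → ∞`. -/
theorem laplacian_flow_average_consensus
    (n : ℕ) (L : Matrix (Fin n) (Fin n) ℝ)
    (hPSD : L.PosSemidef)
    (hones : L *ᵥ (fun _ : Fin n => (1 : ℝ)) = 0)
    (hker : ∀ v : Fin n → ℝ, L *ᵥ v = 0 ↔ ∃ c : ℝ, v = fun _ : Fin n => c)
    (z0 : Fin n → ℝ) :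
    Filter.Tendsto
      (fun t : ℝ => (NormedSpace.exp ((-t) • L)) *ᵥ z0)
      Filter.atTop
      (nhds (((1 : ℝ) / n) •
        ((Matrix.vecMulVec (fun _ : Fin n => (1 : ℝ)) (fun _ : Fin n => (1 : ℝ))) *ᵥ z0))) := by
  classical
  rcases Nat.eq_zero_or_pos n with hn | hn
  · subst hn
    have hsub : Subsingleton (Fin 0 → ℝ) := ⟨fun a b => funext fun i => i.elim0⟩
    exact tendsto_const_nhds.congr fun t => Subsingleton.elim _ _
  have hH : L.IsHermitian := hPSD.1
  set lam : Fin n → ℝ := hH.eigenvalues with hlam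
  set u : Fin n → (Fin n → ℝ) := fun i => ⇑(hH.eigenvectorBasis i) with hu
  have hLu : ∀ i, L *ᵥ u i = lam i • u i := hH.mulVec_eigenvectorBasis
  have hlamnn : ∀ i, 0 ≤ lam i := hPSD.eigenvalues_nonneg
  -- orthonormality
  have horth : ∀ i j, (∑ k, u i k * u j k) = if i = j then 1 else 0 := by
    intro i j
    have h := (orthonormal_iff_ite.mp hH.eigenvectorBasis.orthonormal) i j
    simpa [PiLp.inner_apply, RCLike.inner_apply, u, mul_comm] using h
  -- zero eigenvectors are constants
  have hconst : ∀ i, lam i = 0 → ∃ c : ℝ, (u i = fun _ => c) ∧ c * c * n = 1 := by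
    intro i h0
    have hz : L *ᵥ u i = 0 := by rw [hLu i, h0, zero_smul]
    obtain ⟨c, hc⟩ := (hker (u i)).1 hz
    refine ⟨c, hc, ?_⟩
    have h := horth i i
    rw [if_pos rfl, hc] at h
    simp [Finset.sum_const, Finset.card_univ] at h
    nlinarith [h]
  -- existence of a zero eigenvalue
  have hdet : L.det = 0 := by
    rw [← Matrix.exists_mulVec_eq_zero_iff]
    refine ⟨fun _ => 1, ?_, hones⟩
    intro h
    have := congrFun h ⟨0, hn⟩
    simpa using this
  have hex0 : ∃ i, lam i = 0 := by
    have h := hH.det_eq_prod_eigenvalues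
    rw [hdet] at h
    obtain ⟨i, _, hi⟩ := Finset.prod_eq_zero_iff.mp h.symm
    exact ⟨i, by simpa using hi⟩
  obtain ⟨i0, hi0⟩ := hex0
  have huniq : ∀ i, lam i = 0 → i = i0 := by
    intro i hi
    by_contra hne
    obtain ⟨cc, hc, hc2⟩ := hconst i hi
    obtain ⟨d, hd, hd2⟩ := hconst i0 hi0
    have h := horth i i0
    rw [if_neg hne, hc, hd] at h
    simp [Finset.sum_const, Finset.card_univ] at h
    rcases h with h | h | h
    · omega
    · rw [h] at hc2; norm_num at hc2
    · rw [h] at hd2; norm_num at hd2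
  -- unitary as a unit
  set Uu : (Matrix (Fin n) (Fin n) ℝ)ˣ := Unitary.toUnits hH.eigenvectorUnitary with hUudef
  have hUu : (Uu : Matrix (Fin n) (Fin n) ℝ)
      = (hH.eigenvectorUnitary : Matrix (Fin n) (Fin n) ℝ) := rfl
  have hUuinv : ((Uu⁻¹ : (Matrix (Fin n) (Fin n) ℝ)ˣ) : Matrix (Fin n) (Fin n) ℝ)
      = star (hH.eigenvectorUnitary : Matrix (Fin n) (Fin n) ℝ) := rfl
  have hspec : L = (Uu : Matrix (Fin n) (Fin n) ℝ) * Matrix.diagonal lam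
      * ((Uu⁻¹ : (Matrix (Fin n) (Fin n) ℝ)ˣ) : Matrix (Fin n) (Fin n) ℝ) := by
    rw [hUu, hUuinv]
    simpa [Function.comp] using hH.spectral_theorem
  -- exponential formula
  have hexp : ∀ t : ℝ, NormedSpace.exp ((-t) • L)
      = (Uu : Matrix (Fin n) (Fin n) ℝ)
        * Matrix.diagonal (fun i => Real.exp (-t * lam i))
        * ((Uu⁻¹ : (Matrix (Fin n) (Fin n) ℝ)ˣ) : Matrix (Fin n) (Fin n) ℝ) := by
    intro t
    have h1 : (-t) • L = (Uu : Matrix (Fin n) (Fin n) ℝ)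
        * Matrix.diagonal (fun i => (-t) * lam i)
        * ((Uu⁻¹ : (Matrix (Fin n) (Fin n) ℝ)ˣ) : Matrix (Fin n) (Fin n) ℝ) := by
      rw [hspec, ← smul_mul_assoc, ← mul_smul_comm, ← Matrix.diagonal_smul]
      congr 2
    rw [h1, Matrix.exp_units_conj Uu, Matrix.exp_diagonal]
    congr 2
    funext i
    rw [Pi.exp_def]
    simp [Real.exp_eq_exp_ℝ]
  -- coordinates of the flow
  set c : Fin n → ℝ := fun i => ∑ k, u i k * z0 k with hcdef
  have hF : ∀ t : ℝ, ∀ j, (NormedSpace.exp ((-t) • L) *ᵥ z0) j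
      = ∑ i, Real.exp (-t * lam i) * (c i * u i j) := by
    intro t j
    rw [hexp t, ← Matrix.mulVec_mulVec, ← Matrix.mulVec_mulVec]
    have hstar : ∀ i, (((Uu⁻¹ : (Matrix (Fin n) (Fin n) ℝ)ˣ) : Matrix (Fin n) (Fin n) ℝ) *ᵥ z0) i
        = c i := by
      intro i
      simp [hUuinv, Matrix.mulVec, dotProduct, Matrix.star_apply, u, c]
    have hmid : ∀ i, ((Matrix.diagonal fun i => Real.exp (-t * lam i)) *ᵥ
        (((Uu⁻¹ : (Matrix (Fin n) (Fin n) ℝ)ˣ) : Matrix (Fin n) (Fin n) ℝ) *ᵥ z0)) i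
        = Real.exp (-t * lam i) * c i := by
      intro i
      rw [Matrix.mulVec_diagonal, hstar]
    have hrow : ∀ (w : Fin n → ℝ), ((Uu : Matrix (Fin n) (Fin n) ℝ) *ᵥ w) j
        = ∑ i, (Uu : Matrix (Fin n) (Fin n) ℝ) j i * w i := by
      intro w
      simp [Matrix.mulVec, dotProduct]
    rw [hrow]
    apply Finset.sum_congr rfl
    intro i _
    rw [hmid i, hUu, Matrix.IsHermitian.eigenvectorUnitary_apply]
    show u i j * _ = _
    ring
  -- value of the limit
  have hval : ∀ j, (∑ i, (if lam i = 0 then c i * u i j else 0))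
      = (((1 : ℝ) / n) •
        ((Matrix.vecMulVec (fun _ : Fin n => (1 : ℝ)) (fun _ : Fin n => (1 : ℝ))) *ᵥ z0)) j := by
    intro j
    have hn0 : (n : ℝ) ≠ 0 := Nat.cast_ne_zero.mpr hn.ne'
    have h1 : ∀ i, (if lam i = 0 then c i * u i j else 0)
        = (if i = i0 then c i * u i j else 0) := by
      intro i
      by_cases h : lam i = 0
      · rw [if_pos h, if_pos (huniq i h)]
      · rw [if_neg h, if_neg (fun he => h (by rw [he]; exact hi0))]
    rw [Finset.sum_congr rfl fun i _ => h1 i, Finset.sum_ite_eq' Finset.univ i0]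
    simp only [Finset.mem_univ, if_true]
    obtain ⟨d, hd, hd2⟩ := hconst i0 hi0
    have hc0 : c i0 = d * ∑ k, z0 k := by
      simp [hcdef, hd, Finset.mul_sum]
    have hrhs : (((1 : ℝ) / n) •
        ((Matrix.vecMulVec (fun _ : Fin n => (1 : ℝ)) (fun _ : Fin n => (1 : ℝ))) *ᵥ z0)) j
        = (1 / n) * ∑ k, z0 k := by
      simp [Matrix.vecMulVec, Matrix.mulVec, dotProduct]
    rw [hrhs, hc0, hd]
    field_simp
    linear_combination (∑ k, z0 k) * hd2
  -- per-term limits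
  have hterm : ∀ j i, Filter.Tendsto (fun t : ℝ => Real.exp (-t * lam i) * (c i * u i j))
      Filter.atTop (nhds (if lam i = 0 then c i * u i j else 0)) := by
    intro j i
    by_cases h0 : lam i = 0
    · rw [if_pos h0]
      have : (fun t : ℝ => Real.exp (-t * lam i) * (c i * u i j))
          = fun _ => c i * u i j := by
        funext t
        rw [h0, mul_zero, Real.exp_zero, one_mul]
      rw [this]
      exact tendsto_const_nhds
    · rw [if_neg h0]
      have hpos : 0 < lam i := lt_of_le_of_ne (hlamnn i) (Ne.symm h0)
      have h1 : Filter.Tendsto (fun t : ℝ => -t * lam i) Filter.atTop Filter.atBot := by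
        have h2 := (Filter.tendsto_id (α := ℝ)).atTop_mul_const hpos
        have h3 := Filter.tendsto_neg_atTop_atBot.comp h2
        refine h3.congr fun t => ?_
        simp [neg_mul]
      have h2 := Real.tendsto_exp_atBot.comp h1
      have h3 := h2.mul_const (c i * u i j)
      simpa using h3
  -- assemble
  rw [tendsto_pi_nhds]
  intro j
  have hsum := tendsto_finset_sum Finset.univ fun i _ => hterm j i
  rw [← hval j] at *
  exact Filter.Tendsto.congr (fun t => (hF t j).symm) hsum
end

section
/- The limiting opinion vector x_f = (1/n) P^{-1} 𝟙_n 𝟙_n^T P x_0 is explicitly given by: (x_f)_i = −γ s/n for every i ∈ V1 and (x_f)_j = s/n for every j ∈ V2, where s = 𝟙_n^T P x_0 = Σ_{j ∈ V2} (x_0)_j − γ^{-1} Σ_{i ∈ V1} (x_0)_i. In particular, all agents in V1 share a common final opinion, all agents in V2 share a common final opinion, and (x_f)_i = −γ (x_f)_j for i ∈ V1, j ∈ V2, so the dominant group's final opinion has γ times the magnitude and opposite sign of the other group's final opinion. -/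
open scoped Matrix

/-- The limiting opinion vector `x_f = (1/n) P⁻¹ 𝟙 𝟙ᵀ P x₀` satisfies
`(x_f)_i = −γ s / n` for `i ∈ V1` and `(x_f)_j = s / n` for `j ∈ V2`, where
`s = 𝟙ᵀ P x₀ = Σ_{j ∈ V2} (x₀)_j − γ⁻¹ Σ_{i ∈ V1} (x₀)_i`.  In particular all agents of
`V1` (resp. `V2`) share a common final opinion and `(x_f)_i = −γ (x_f)_j` for `i ∈ V1`,
`j ∈ V2`. -/
theorem limiting_opinion_vector
    (n r : ℕ) (hn : 2 ≤ n) (hr : 1 ≤ r) (hrn : r < n)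
    (γ : ℝ) (hγ : 0 < γ)
    (Q R P : Matrix (Fin n) (Fin n) ℝ)
    (hQ : Q = Matrix.diagonal (fun i : Fin n => if (i : ℕ) < r then γ else 1))
    (hR : R = Matrix.diagonal (fun i : Fin n => if (i : ℕ) < r then (-1 : ℝ) else 1))
    (hP : P = R * Q⁻¹)
    (x0 xf : Fin n → ℝ) (s : ℝ)
    (hs : s = ∑ i : Fin n, (P *ᵥ x0) i)
    (hxf : xf = ((1 : ℝ) / n) •
      ((P⁻¹ * Matrix.vecMulVec (fun _ : Fin n => (1 : ℝ)) (fun _ : Fin n => (1 : ℝ)) * P)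
        *ᵥ x0)) :
    (s = (∑ j : Fin n, if (j : ℕ) < r then 0 else x0 j) -
        γ⁻¹ * (∑ i : Fin n, if (i : ℕ) < r then x0 i else 0)) ∧
    (∀ i : Fin n, (i : ℕ) < r → xf i = -γ * s / n) ∧
    (∀ j : Fin n, ¬ (j : ℕ) < r → xf j = s / n) ∧
    (∀ i j : Fin n, (i : ℕ) < r → ¬ (j : ℕ) < r → xf i = -γ * xf j) := by
  have hγ0 : γ ≠ 0 := ne_of_gt hγ
  have hQinv : Q⁻¹ = Matrix.diagonal (fun i : Fin n => if (i : ℕ) < r then γ⁻¹ else 1) := by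
    apply Matrix.inv_eq_right_inv
    rw [hQ, Matrix.diagonal_mul_diagonal]
    ext i j
    by_cases h : (i : ℕ) < r <;>
      simp [Matrix.diagonal, Matrix.one_apply, h, mul_inv_cancel₀ hγ0]
  have hPd : P = Matrix.diagonal (fun i : Fin n => if (i : ℕ) < r then -γ⁻¹ else 1) := by
    rw [hP, hR, hQinv, Matrix.diagonal_mul_diagonal]
    ext i j
    by_cases h : (i : ℕ) < r <;> simp [Matrix.diagonal, h]
  have hPinv : P⁻¹ = Matrix.diagonal (fun i : Fin n => if (i : ℕ) < r then -γ else 1) := by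
    apply Matrix.inv_eq_right_inv
    rw [hPd, Matrix.diagonal_mul_diagonal]
    ext i j
    by_cases h : (i : ℕ) < r <;>
      simp [Matrix.diagonal, Matrix.one_apply, h, inv_mul_cancel₀ hγ0]
  have hs' : s = (∑ j : Fin n, if (j : ℕ) < r then 0 else x0 j) -
      γ⁻¹ * (∑ i : Fin n, if (i : ℕ) < r then x0 i else 0) := by
    rw [hs, hPd]
    simp only [Matrix.mulVec_diagonal]
    rw [Finset.mul_sum, ← Finset.sum_sub_distrib]
    apply Finset.sum_congr rfl
    intro i _
    by_cases h : (i : ℕ) < r <;> simp [h] <;> ring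
  have hxf' : ∀ i : Fin n, xf i = (if (i : ℕ) < r then -γ else 1) * s / n := by
    intro i
    rw [hxf]
    simp only [Pi.smul_apply, smul_eq_mul, Matrix.mul_assoc, ← Matrix.mulVec_mulVec,
      hPinv, Matrix.mulVec_diagonal]
    have hinner : ((Matrix.vecMulVec (fun _ : Fin n => (1 : ℝ)) (fun _ : Fin n => (1 : ℝ)))
        *ᵥ (P *ᵥ x0)) i = s := by
      rw [hs]
      simp [Matrix.mulVec, Matrix.vecMulVec, dotProduct]
    rw [hinner]
    ring
  refine ⟨hs', ?_, ?_, ?_⟩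
  · intro i hi; rw [hxf' i]; simp [hi]
  · intro j hj; rw [hxf' j]; simp [hj]
  · intro i j hi hj
    rw [hxf' i, hxf' j]
    rw [if_pos hi, if_neg hj]
    ring
end
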